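/- Let X be a normal topological space and M a proper nonempty subset of X. Then M is both a Gδ-set and an Fσ-set in X if and only if there exists an idempotent f in the ring B₁(X) of Baire one functions such that the zero set Z(f) = M. -/

import Mathlib

open Filter Topology

def IsBaireOne {X : Type*} [TopologicalSpace X] (f : X → ℝ) : Prop :=
  ∃ F : ℕ → X → ℝ, (∀ n, Continuous (F n)) ∧
    ∀ x, Filter.Tendsto (fun n => F n x) Filter.atTop (nhds (f x))

def B1 (X : Type*) [TopologicalSpace X] : Subring (X → ℝ) where
  carrier := {f | IsBaireOne f}
  zero_mem' := ⟨fun _ _ => 0, fun _ => continuous_const, fun _ => tendsto_const_nhds⟩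
  one_mem' := ⟨fun _ _ => 1, fun _ => continuous_const, fun _ => tendsto_const_nhds⟩
  add_mem' := by
    rintro f g ⟨F, hF, hFf⟩ ⟨G, hG, hGg⟩
    exact ⟨fun n => F n + G n, fun n => (hF n).add (hG n), fun x => (hFf x).add (hGg x)⟩
  mul_mem' := by
    rintro f g ⟨F, hF, hFf⟩ ⟨G, hG, hGg⟩
    exact ⟨fun n => F n * G n, fun n => (hF n).mul (hG n), fun x => (hFf x).mul (hGg x)⟩
  neg_mem' := by
    rintro f ⟨F, hF, hFf⟩
    exact ⟨fun n => -F n, fun n => (hF n).neg, fun x => (hFf x).neg⟩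

def zset {X : Type*} [TopologicalSpace X] (f : ↥(B1 X)) : Set X := {x | (f : X → ℝ) x = 0}

noncomputable def chi {X : Type*} (p : X) : X → ℝ := Set.indicator {p} (fun _ => 1)

def IsFsigma {X : Type*} [TopologicalSpace X] (s : Set X) : Prop :=
  ∃ c : ℕ → Set X, (∀ n, IsClosed (c n)) ∧ s = ⋃ n, c n

theorem stmt_0 {X : Type*} [TopologicalSpace X] [T1Space X] [NormalSpace X]
    (M : Set X) (hne : M.Nonempty) (hpr : M ≠ Set.univ) :
    (IsGδ M ∧ IsFsigma M) ↔ ∃ f : ↥(B1 X), f * f = f ∧ zset f = M := by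
  constructor
  · rintro ⟨hG, c, hc, hMc⟩
    obtain ⟨U, hU, hMU⟩ := hG.eq_iInter_nat
    -- increasing closed sets inside M and inside Mᶜ
    set K : ℕ → Set X := fun n => Set.accumulate c n with hK
    set C : ℕ → Set X := fun n => Set.accumulate (fun m => (U m)ᶜ) n with hC
    have hKcl : ∀ n, IsClosed (K n) := fun n =>
      Set.Finite.isClosed_biUnion (Set.finite_Iic n) (fun i _ => hc i)
    have hCcl : ∀ n, IsClosed (C n) := fun n =>
      Set.Finite.isClosed_biUnion (Set.finite_Iic n) (fun i _ => (hU i).isClosed_compl)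
    have hKM : ∀ n, K n ⊆ M := fun n => by
      rw [hMc]; exact Set.iUnion₂_subset fun i _ => Set.subset_iUnion c i
    have hCM : ∀ n, C n ⊆ Mᶜ := fun n =>
      Set.iUnion₂_subset fun i _ => by
        intro x hx hxM
        rw [hMU] at hxM
        exact hx (Set.mem_iInter.mp hxM i)
    have hdisj : ∀ n, Disjoint (K n) (C n) := fun n =>
      Set.disjoint_left.mpr fun x hx hx' => (hCM n hx') (hKM n hx)
    choose g hg0 hg1 hg01 using fun n =>
      exists_continuous_zero_one_of_isClosed (hKcl n) (hCcl n) (hdisj n)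
    classical
    set f : X → ℝ := fun x => if x ∈ M then 0 else 1 with hf
    have hfB : IsBaireOne f := by
      refine ⟨fun n => g n, fun n => (g n).continuous, fun x => ?_⟩
      by_cases hx : x ∈ M
      · have : ∃ N, x ∈ c N := by rw [hMc] at hx; exact Set.mem_iUnion.mp hx
        obtain ⟨N, hN⟩ := this
        have : ∀ n ≥ N, g n x = 0 := fun n hn =>
          hg0 n (Set.mem_iUnion₂.mpr ⟨N, hn, hN⟩)
        have hev : ∀ᶠ n in atTop, g n x = 0 := eventually_atTop.mpr ⟨N, this⟩
        simp only [hf, hx, if_pos]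
        exact Tendsto.congr' (by filter_upwards [hev] with n hn using hn.symm)
          tendsto_const_nhds
      · have : ∃ N, x ∈ (U N)ᶜ := by
          by_contra h
          push_neg at h
          exact hx (hMU ▸ Set.mem_iInter.mpr fun i => not_not.mp (h i))
        obtain ⟨N, hN⟩ := this
        have : ∀ n ≥ N, g n x = 1 := fun n hn =>
          hg1 n (Set.mem_iUnion₂.mpr ⟨N, hn, hN⟩)
        have hev : ∀ᶠ n in atTop, g n x = 1 := eventually_atTop.mpr ⟨N, this⟩
        simp only [hf, hx, if_neg, not_false_iff]
        exact Tendsto.congr' (by filter_upwards [hev] with n hn using hn.symm)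
          tendsto_const_nhds
    refine ⟨⟨f, hfB⟩, ?_, ?_⟩
    · ext x
      show f x * f x = f x
      by_cases hx : x ∈ M <;> simp [hf, hx]
    · ext x
      simp only [zset, Set.mem_setOf_eq]
      by_cases hx : x ∈ M <;> simp [hf, hx]
  · rintro ⟨f, hidem, hz⟩
    obtain ⟨F, hFc, hFt⟩ := f.2
    have hval : ∀ x, (f : X → ℝ) x = 0 ∨ (f : X → ℝ) x = 1 := by
      intro x
      have h : (f : X → ℝ) x * (f : X → ℝ) x = (f : X → ℝ) x :=
        congrFun (congrArg Subtype.val hidem) x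
      have h2 : ((f : X → ℝ) x) * ((f : X → ℝ) x - 1) = 0 := by
        rw [mul_sub, mul_one, h, sub_self]
      rcases mul_eq_zero.mp h2 with h3 | h3
      · exact Or.inl h3
      · exact Or.inr (by linarith)
    constructor
    · -- Gδ : M = ⋂ N, (D N)ᶜ with D N closed
      set D : ℕ → Set X := fun N => ⋂ n, ⋂ _ : N ≤ n, (F n) ⁻¹' Set.Ici (1/2 : ℝ)
      have hDcl : ∀ N, IsClosed (D N) :=
        fun N => isClosed_iInter fun n => isClosed_iInter fun _ =>
          IsClosed.preimage (hFc n) isClosed_Ici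
      have hMeq : M = ⋂ N, (D N)ᶜ := by
        ext x
        simp only [Set.mem_iInter, Set.mem_compl_iff, D, Set.mem_iInter, Set.mem_preimage,
          Set.mem_Ici, not_forall, not_le]
        constructor
        · intro hx N
          have hfx : x ∈ zset f := by rw [hz]; exact hx
          have hfx : (f : X → ℝ) x = 0 := hfx
          have : ∀ᶠ n in atTop, F n x < 1/2 := by
            have h := hFt x
            rw [hfx] at h
            exact h.eventually_lt_const (by norm_num)
          obtain ⟨m, hm, hm'⟩ := (this.and (eventually_ge_atTop N)).exists
          exact ⟨m, hm', hm⟩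
        · intro hx
          rcases hval x with h0 | h1
          · rw [← hz]; exact h0
          · exfalso
            have : ∀ᶠ n in atTop, F n x > 1/2 := by
              have h := hFt x
              rw [h1] at h
              exact h.eventually_const_lt (by norm_num)
            obtain ⟨N, hN⟩ := eventually_atTop.mp this
            obtain ⟨m, hm, hm'⟩ := hx N
            exact absurd (hN m hm) (not_lt.mpr hm'.le)
      rw [hMeq]
      exact IsGδ.iInter_of_isOpen fun N => (hDcl N).isOpen_compl
    · -- Fσ : M = ⋃ N, E N with E N closed
      set E : ℕ → Set X := fun N => ⋂ n, ⋂ _ : N ≤ n, (F n) ⁻¹' Set.Iic (1/2 : ℝ)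
      refine ⟨E, fun N => isClosed_iInter fun n => isClosed_iInter fun _ =>
        IsClosed.preimage (hFc n) isClosed_Iic, ?_⟩
      ext x
      simp only [Set.mem_iUnion, E, Set.mem_iInter, Set.mem_preimage, Set.mem_Iic]
      constructor
      · intro hx
        have hfx : x ∈ zset f := by rw [hz]; exact hx
        have hfx : (f : X → ℝ) x = 0 := hfx
        have : ∀ᶠ n in atTop, F n x ≤ 1/2 := by
          have h := hFt x
          rw [hfx] at h
          exact (h.eventually_lt_const (by norm_num)).mono fun n hn => hn.le
        obtain ⟨N, hN⟩ := eventually_atTop.mp this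
        exact ⟨N, fun n hn => hN n hn⟩
      · rintro ⟨N, hN⟩
        have hle : (f : X → ℝ) x ≤ 1/2 := by
          refine le_of_tendsto (hFt x) (eventually_atTop.mpr ⟨N, hN⟩)
        rcases hval x with h0 | h1
        · rw [← hz]; exact h0
        · rw [h1] at hle; norm_num at hle
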